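/- Let X be a metric space with Hausdorff space H of nonempty compact subsets, and let q : X → Y be an open, proper, surjective continuous map. Then the map e : Y → H, e(y) = q⁻¹(y), is a topological embedding (continuous, injective, and a homeomorphism onto its image). -/
import Mathlib


open TopologicalSpace Metric Set

theorem stmt16 (X : Type*) [MetricSpace X] (Y : Type*) [TopologicalSpace Y]
    (q : X → Y) (hcont : Continuous q) (hopen : IsOpenMap q)
    (hproper : IsProperMap q) (hsurj : Function.Surjective q) :
    ∃ e : Y → NonemptyCompacts X,
      (∀ y : Y, (e y : Set X) = q ⁻¹' {y}) ∧ Topology.IsEmbedding e := by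
  have hfibc : ∀ y : Y, IsCompact (q ⁻¹' {y}) := fun y =>
    hproper.isCompact_preimage isCompact_singleton
  have hfibn : ∀ y : Y, (q ⁻¹' {y}).Nonempty := fun y => by
    obtain ⟨x, hx⟩ := hsurj y; exact ⟨x, hx⟩
  set e : Y → NonemptyCompacts X := fun y => ⟨⟨q ⁻¹' {y}, hfibc y⟩, hfibn y⟩ with he
  have hcoe : ∀ y : Y, (e y : Set X) = q ⁻¹' {y} := fun y => rfl
  refine ⟨e, hcoe, ?_⟩
  -- injectivity
  have hinj : Function.Injective e := by
    intro y₁ y₂ h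
    have h' : (q ⁻¹' {y₁}) = q ⁻¹' {y₂} := congrArg (fun s : NonemptyCompacts X => (s : Set X)) h
    obtain ⟨x, hx⟩ := hfibn y₁
    have hx2 : x ∈ q ⁻¹' {y₂} := h' ▸ hx
    simp only [mem_preimage, mem_singleton_iff] at hx hx2
    rw [← hx, hx2]
  -- continuity
  have hc : Continuous e := by
    rw [continuous_iff_continuousAt]
    intro y
    rw [ContinuousAt, Metric.tendsto_nhds]
    intro ε hε
    -- part (b): lower semicontinuity from openness
    obtain ⟨s, hs⟩ := (hfibc y).elim_finite_subcover
      (fun x : q ⁻¹' {y} => ball (x : X) (ε / 4))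
      (fun x => isOpen_ball) (fun x hx => mem_iUnion.mpr ⟨⟨x, hx⟩, mem_ball_self (by linarith)⟩)
    set V₂ : Set Y := ⋂ x ∈ s, q '' ball (x : X) (ε / 4) with hV₂
    have hV₂open : IsOpen V₂ :=
      isOpen_biInter_finset fun x _ => hopen _ isOpen_ball
    have hyV₂ : y ∈ V₂ :=
      mem_iInter₂.mpr fun x _ => ⟨x, mem_ball_self (by linarith), x.2⟩
    -- part (a): upper semicontinuity from properness
    set T := thickening (ε / 2) (q ⁻¹' {y}) with hT
    have hTopen : IsOpen T := isOpen_thickening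
    have hV₁open : IsOpen ((q '' Tᶜ)ᶜ) := by
      simpa using (hproper.isClosedMap Tᶜ hTopen.isClosed_compl).isOpen_compl
    have hyV₁ : y ∈ (q '' Tᶜ)ᶜ := by
      rintro ⟨x, hxT, hqx⟩
      exact hxT (self_subset_thickening (by linarith) _ (by simp [hqx]))
    have hV : (q '' Tᶜ)ᶜ ∩ V₂ ∈ nhds y :=
      (hV₁open.inter hV₂open).mem_nhds ⟨hyV₁, hyV₂⟩
    filter_upwards [hV] with y' hy'
    obtain ⟨hy₁, hy₂⟩ := hy'
    have hdist : hausdorffDist (q ⁻¹' {y'}) (q ⁻¹' {y}) ≤ ε / 2 := by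
      apply hausdorffDist_le_of_mem_dist (by linarith)
      · intro x hx
        have hxT : x ∈ T := by
          by_contra hxT
          exact hy₁ ⟨x, hxT, hx⟩
        obtain ⟨z, hz, hdz⟩ := mem_thickening_iff.mp hxT
        exact ⟨z, hz, dist_comm x z ▸ hdz.le⟩
      · intro x hx
        obtain ⟨i, his, hxi⟩ := mem_iUnion₂.mp (hs hx)
        obtain ⟨z, hzball, hqz⟩ := mem_iInter₂.mp hy₂ i his
        refine ⟨z, by simp [hqz], ?_⟩
        have := dist_triangle x (i : X) z
        rw [mem_ball] at hxi
        rw [mem_ball, dist_comm] at hzball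
        linarith
    calc dist (e y') (e y) = hausdorffDist (q ⁻¹' {y'}) (q ⁻¹' {y}) :=
          NonemptyCompacts.dist_eq
      _ ≤ ε / 2 := hdist
      _ < ε := by linarith
  -- inducing
  have hind : Topology.IsInducing e := by
    rw [Topology.isInducing_iff_nhds]
    intro y
    refine le_antisymm ((hc.tendsto y).le_comap) ?_
    intro U hU
    obtain ⟨U', hU'U, hU'open, hyU'⟩ := mem_nhds_iff.mp hU
    have hsub : q ⁻¹' {y} ⊆ q ⁻¹' U' := fun x hx => by
      simp only [mem_preimage, mem_singleton_iff] at hx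
      simp [hx, hyU']
    obtain ⟨δ, hδ, hthick⟩ := (hfibc y).exists_thickening_subset_open
      (hU'open.preimage hcont) hsub
    rw [Filter.mem_comap]
    refine ⟨ball (e y) δ, ball_mem_nhds _ hδ, fun y' hy' => ?_⟩
    rw [mem_preimage, mem_ball, NonemptyCompacts.dist_eq] at hy'
    obtain ⟨x, hx⟩ := hfibn y'
    have hne : EMetric.hausdorffEdist (q ⁻¹' {y'}) (q ⁻¹' {y}) ≠ ⊤ :=
      hausdorffEdist_ne_top_of_nonempty_of_bounded (hfibn y') (hfibn y)
        (hfibc y').isBounded (hfibc y).isBounded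
    obtain ⟨z, hz, hdz⟩ := exists_dist_lt_of_hausdorffDist_lt hx hy' hne
    have hxthick : x ∈ thickening δ (q ⁻¹' {y}) := mem_thickening_iff.mpr ⟨z, hz, hdz⟩
    have : x ∈ q ⁻¹' U' := hthick hxthick
    have hqx : q x = y' := hx
    exact hU'U (by rwa [← hqx])
  exact ⟨hind, hinj⟩
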